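/- Let Φ = {φ_1, ..., φ_{n+1}} be a full spark frame for ℝ^n. Then the set of full spark dual frames of Φ is open and dense in the set D_Φ of all dual frames of Φ (with the metric d(G,H) = Σ_i ‖g_i - h_i‖). -/

import Mathlib

variable {n m : ℕ}

open Finset Matrix Polynomial

/-- `ψ` is a dual frame of `φ` in `ℝ^n`. -/
def IsDualFrame (φ ψ : Fin m → EuclideanSpace ℝ (Fin n)) : Prop :=
  ∀ f : EuclideanSpace ℝ (Fin n), ∑ i, (inner ℝ (ψ i) f : ℝ) • φ i = f

/-- A family of vectors in `ℝ^n` is full spark if every `n` of its vectors are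
linearly independent. -/
def FullSpark (φ : Fin m → EuclideanSpace ℝ (Fin n)) : Prop :=
  ∀ s : Finset (Fin m), s.card = n → LinearIndependent ℝ (fun i : s => φ i)

lemma li_iff_det {v : Fin n → EuclideanSpace ℝ (Fin n)} :
    LinearIndependent ℝ v ↔
      (Matrix.of fun i k : Fin n => v k i).det ≠ 0 := by
  classical
  set b := (EuclideanSpace.basisFun (Fin n) ℝ).toBasis with hb
  have hdet : b.det v = (Matrix.of fun i k : Fin n => v k i).det := by
    rw [Module.Basis.det_apply]
    congr 1
  constructor
  · intro h
    have hspan := h.span_eq_top_of_card_eq_finrank' (by simp)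
    have := (Module.Basis.is_basis_iff_det b).mp ⟨h, hspan⟩
    rw [hdet] at this
    exact isUnit_iff_ne_zero.mp this
  · intro h
    exact ((Module.Basis.is_basis_iff_det b).mpr (by rw [hdet]; exact isUnit_iff_ne_zero.mpr h)).1

lemma li_succAbove_iff {v : Fin (n + 1) → EuclideanSpace ℝ (Fin n)} {j : Fin (n + 1)}
    {s : Finset (Fin (n + 1))} (hs : s = {j}ᶜ) (hcard : s.card = n) :
    LinearIndependent ℝ (fun i : s => v i) ↔
      LinearIndependent ℝ (fun i : Fin n => v (j.succAbove i)) := by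
  have hmem : ∀ i : Fin n, j.succAbove i ∈ s := by
    intro i
    subst hs
    simp [Finset.mem_compl, Fin.succAbove_ne j i]
  let g : Fin n → s := fun i => ⟨j.succAbove i, hmem i⟩
  have hinj : Function.Injective g := by
    intro a b hab
    exact Fin.succAbove_right_injective (congrArg Subtype.val hab)
  have hbij : Function.Bijective g := by
    rw [Fintype.bijective_iff_injective_and_card]
    exact ⟨hinj, by simp [hcard]⟩
  exact (linearIndependent_equiv (Equiv.ofBijective g hbij) (f := fun i : s => v i)).symm

lemma fullSpark_iff_li {v : Fin (n + 1) → EuclideanSpace ℝ (Fin n)} :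
    FullSpark v ↔ ∀ j : Fin (n + 1), LinearIndependent ℝ (fun i : Fin n => v (j.succAbove i)) := by
  constructor
  · intro h j
    have hcard : ({j}ᶜ : Finset (Fin (n + 1))).card = n := by
      simp [Finset.card_compl]
    exact (li_succAbove_iff rfl hcard).mp (h _ hcard)
  · intro h s hcard
    have hcompl : sᶜ.card = 1 := by
      rw [Finset.card_compl, hcard]
      simp
    obtain ⟨j, hj⟩ := Finset.card_eq_one.mp hcompl
    have hs : s = {j}ᶜ := by rw [← hj, compl_compl]
    exact (li_succAbove_iff hs hcard).mpr (h j)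

lemma fullSpark_iff_det {v : Fin (n + 1) → EuclideanSpace ℝ (Fin n)} :
    FullSpark v ↔
      ∀ j : Fin (n + 1), (Matrix.of fun i k : Fin n => v (j.succAbove k) i).det ≠ 0 :=
  fullSpark_iff_li.trans (forall_congr' fun _ => li_iff_det)

lemma exists_fullSpark_dual (φ : Fin m → EuclideanSpace ℝ (Fin n))
    (hframe : Submodule.span ℝ (Set.range φ) = ⊤) (hfs : FullSpark φ) :
    ∃ G : Fin m → EuclideanSpace ℝ (Fin n), IsDualFrame φ G ∧ FullSpark G := by
  classical
  let S : EuclideanSpace ℝ (Fin n) →ₗ[ℝ] EuclideanSpace ℝ (Fin n) :=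
    ∑ i, ((innerSL ℝ (φ i)).toLinearMap).smulRight (φ i)
  have hS : ∀ f, S f = ∑ i, (inner ℝ (φ i) f : ℝ) • φ i := by
    intro f
    simp [S, LinearMap.sum_apply]
  have hSsym : ∀ f g : EuclideanSpace ℝ (Fin n), (inner ℝ (S f) g : ℝ) = inner ℝ f (S g) := by
    intro f g
    rw [hS, hS, sum_inner, inner_sum]
    congr 1
    ext i
    rw [real_inner_smul_left, real_inner_smul_right, real_inner_comm (φ i) f]
    ring
  have hinj : Function.Injective S := by
    rw [← LinearMap.ker_eq_bot, LinearMap.ker_eq_bot']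
    intro f hf
    have h0 : ∀ i, (inner ℝ (φ i) f : ℝ) = 0 := by
      have hzero : (inner ℝ (S f) f : ℝ) = 0 := by rw [hf, inner_zero_left]
      rw [hS, sum_inner] at hzero
      have hterm : ∀ i ∈ Finset.univ, (0:ℝ) ≤ inner ℝ ((inner ℝ (φ i) f : ℝ) • φ i) f := by
        intro i _
        rw [real_inner_smul_left]
        exact mul_self_nonneg _
      intro i
      have := (Finset.sum_eq_zero_iff_of_nonneg hterm).mp hzero i (Finset.mem_univ i)
      rw [real_inner_smul_left] at this
      exact mul_self_eq_zero.mp this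
    have hall : ∀ v ∈ Submodule.span ℝ (Set.range φ), (inner ℝ v f : ℝ) = 0 := by
      intro v hv
      induction hv using Submodule.span_induction with
      | mem x hx => obtain ⟨i, rfl⟩ := hx; exact h0 i
      | zero => simp
      | add x y _ _ hx hy => rw [inner_add_left, hx, hy, add_zero]
      | smul c x _ hx => rw [real_inner_smul_left, hx, mul_zero]
    exact inner_self_eq_zero.mp (hall f (hframe ▸ Submodule.mem_top))
  have hsurj := (LinearMap.injective_iff_surjective).mp hinj
  let Se := LinearEquiv.ofBijective S ⟨hinj, hsurj⟩
  have hT : ∀ f, S (Se.symm f) = f := fun f => Se.apply_symm_apply f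
  have hTsym : ∀ f g : EuclideanSpace ℝ (Fin n),
      (inner ℝ (Se.symm f) g : ℝ) = inner ℝ f (Se.symm g) := by
    intro f g
    calc (inner ℝ (Se.symm f) g : ℝ) = inner ℝ (Se.symm f) (S (Se.symm g)) := by rw [hT]
    _ = inner ℝ (S (Se.symm f)) (Se.symm g) := (hSsym _ _).symm
    _ = inner ℝ f (Se.symm g) := by rw [hT]
  refine ⟨fun i => Se.symm (φ i), ?_, ?_⟩
  · intro f
    have : ∀ i, (inner ℝ (Se.symm (φ i)) f : ℝ) = inner ℝ (φ i) (Se.symm f) :=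
      fun i => hTsym (φ i) f
    simp only [this]
    rw [← hS, hT]
  · intro s hs
    exact (hfs s hs).map' Se.symm.toLinearMap (LinearEquiv.ker _)

lemma isDualFrame_line {φ g G : Fin m → EuclideanSpace ℝ (Fin n)}
    (hg : IsDualFrame φ g) (hG : IsDualFrame φ G) (t : ℝ) :
    IsDualFrame φ (fun i => g i + t • (G i - g i)) := by
  intro f
  calc ∑ i, (inner ℝ (g i + t • (G i - g i)) f : ℝ) • φ i
      = ∑ i, ((inner ℝ (g i) f : ℝ) • φ i +
          t • ((inner ℝ (G i) f : ℝ) • φ i - (inner ℝ (g i) f : ℝ) • φ i)) := by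
        refine Finset.sum_congr rfl fun i _ => ?_
        rw [inner_add_left, real_inner_smul_left, inner_sub_left]
        module
    _ = (∑ i, (inner ℝ (g i) f : ℝ) • φ i) +
          t • ((∑ i, (inner ℝ (G i) f : ℝ) • φ i) - ∑ i, (inner ℝ (g i) f : ℝ) • φ i) := by
        rw [Finset.sum_add_distrib, ← Finset.smul_sum, Finset.sum_sub_distrib]
    _ = f := by rw [hg f, hG f]; simp

lemma det_continuous (j : Fin (n + 1)) :
    Continuous fun h : Fin (n + 1) → EuclideanSpace ℝ (Fin n) =>
      (Matrix.of fun i k : Fin n => h (j.succAbove k) i).det := by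
  apply Continuous.matrix_det
  apply continuous_pi
  intro i
  apply continuous_pi
  intro k
  exact (EuclideanSpace.proj i).continuous.comp (continuous_apply (j.succAbove k))

lemma openness_aux (g : Fin (n + 1) → EuclideanSpace ℝ (Fin n)) (hgfs : FullSpark g) :
    ∃ ε > 0, ∀ h : Fin (n + 1) → EuclideanSpace ℝ (Fin n),
      (∑ i, ‖g i - h i‖) < ε → FullSpark h := by
  classical
  set U : Set (Fin (n + 1) → EuclideanSpace ℝ (Fin n)) :=
    {h | ∀ j : Fin (n + 1), (Matrix.of fun i k : Fin n => h (j.succAbove k) i).det ≠ 0} with hU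
  have hopen : IsOpen U := by
    have : U = ⋂ j : Fin (n + 1),
        (fun h : Fin (n + 1) → EuclideanSpace ℝ (Fin n) =>
          (Matrix.of fun i k : Fin n => h (j.succAbove k) i).det) ⁻¹' {(0:ℝ)}ᶜ := by
      ext h
      simp [hU]
    rw [this]
    exact isOpen_iInter_of_finite fun j =>
      (isOpen_compl_singleton).preimage (det_continuous j)
  have hgU : g ∈ U := fullSpark_iff_det.mp hgfs
  obtain ⟨ε, hε, hball⟩ := Metric.isOpen_iff.mp hopen g hgU
  refine ⟨ε, hε, fun h hsum => ?_⟩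
  have hmem : h ∈ Metric.ball g ε := by
    rw [Metric.mem_ball, dist_comm]
    rw [dist_pi_lt_iff hε]
    intro i
    calc dist (g i) (h i) = ‖g i - h i‖ := by rw [dist_eq_norm]
      _ ≤ ∑ i, ‖g i - h i‖ :=
        Finset.single_le_sum (f := fun i => ‖g i - h i‖) (fun i _ => norm_nonneg _)
          (Finset.mem_univ i)
      _ < ε := hsum
  exact fullSpark_iff_det.mpr (hball hmem)

lemma density_aux (φ g G : Fin (n + 1) → EuclideanSpace ℝ (Fin n))
    (hg : IsDualFrame φ g) (hG : IsDualFrame φ G) (hGfs : FullSpark G)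
    {ε : ℝ} (hε : 0 < ε) :
    ∃ h : Fin (n + 1) → EuclideanSpace ℝ (Fin n),
      IsDualFrame φ h ∧ FullSpark h ∧ (∑ i, ‖g i - h i‖) < ε := by
  classical
  set C : ℝ := ∑ i, ‖G i - g i‖ with hC
  have hC0 : 0 ≤ C := Finset.sum_nonneg fun i _ => norm_nonneg _
  set P : Fin (n + 1) → Polynomial ℝ := fun j =>
    (Matrix.of fun i k : Fin n =>
      Polynomial.C (g (j.succAbove k) i) +
        Polynomial.X * Polynomial.C (G (j.succAbove k) i - g (j.succAbove k) i)).det with hP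
  have heval : ∀ (t : ℝ) (j : Fin (n + 1)), (P j).eval t =
      (Matrix.of fun i k : Fin n =>
        (g (j.succAbove k) + t • (G (j.succAbove k) - g (j.succAbove k))) i).det := by
    intro t j
    have h1 : (P j).eval t = (Polynomial.evalRingHom t) (P j) := rfl
    rw [h1, hP, RingHom.map_det]
    congr 1
    ext i k
    simp [PiLp.add_apply, PiLp.smul_apply, PiLp.sub_apply, smul_eq_mul]
  have hP1 : ∀ j, (P j).eval 1 ≠ 0 := by
    intro j
    rw [heval 1 j]
    have hmat : (Matrix.of fun i k : Fin n =>
        (g (j.succAbove k) + (1:ℝ) • (G (j.succAbove k) - g (j.succAbove k))) i) =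
        (Matrix.of fun i k : Fin n => G (j.succAbove k) i) := by
      ext i k
      simp
    rw [hmat]
    exact fullSpark_iff_det.mp hGfs j
  have hPne : ∀ j, P j ≠ 0 := by
    intro j h0
    exact hP1 j (by rw [h0]; simp)
  have hfin : (⋃ j : Fin (n + 1), {t : ℝ | (P j).IsRoot t}).Finite :=
    Set.finite_iUnion fun j => Polynomial.finite_setOf_isRoot (hPne j)
  have hδ : 0 < ε / (C + 1) := div_pos hε (by linarith)
  have hne : ((Set.Ioo (0:ℝ) (ε / (C + 1))) \
      ⋃ j : Fin (n + 1), {t : ℝ | (P j).IsRoot t}).Nonempty :=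
    ((Set.Ioo_infinite hδ).diff hfin).nonempty
  obtain ⟨t, htIoo, htroot⟩ := hne
  obtain ⟨ht0, htδ⟩ := htIoo
  refine ⟨fun i => g i + t • (G i - g i), isDualFrame_line hg hG t, ?_, ?_⟩
  · apply fullSpark_iff_det.mpr
    intro j
    rw [← heval t j]
    intro h0
    exact htroot (Set.mem_iUnion.mpr ⟨j, h0⟩)
  · have hsum : (∑ i, ‖g i - (g i + t • (G i - g i))‖) = t * C := by
      rw [hC, Finset.mul_sum]
      refine Finset.sum_congr rfl fun i _ => ?_
      rw [sub_add_cancel_left, norm_neg, norm_smul, Real.norm_eq_abs, abs_of_pos ht0]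
    rw [hsum]
    calc t * C ≤ t * (C + 1) := by nlinarith
      _ < (ε / (C + 1)) * (C + 1) := by
        exact mul_lt_mul_of_pos_right htδ (by linarith)
      _ = ε := div_mul_cancel₀ ε (by linarith)

/-- for a full spark frame `φ` of `n+1` vectors in `ℝ^n`, the set
of full spark dual frames is open and dense in the set of all dual frames
(metric `d(G,H) = ∑ i ‖g i - h i‖`). -/
theorem fullSparkDuals_open_dense
    (φ : Fin (n + 1) → EuclideanSpace ℝ (Fin n))
    (hframe : Submodule.span ℝ (Set.range φ) = ⊤)
    (hfs : FullSpark φ) :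
    -- openness
    (∀ g : Fin (n + 1) → EuclideanSpace ℝ (Fin n),
      IsDualFrame φ g → FullSpark g →
        ∃ ε > 0, ∀ h : Fin (n + 1) → EuclideanSpace ℝ (Fin n),
          IsDualFrame φ h → (∑ i, ‖g i - h i‖) < ε → FullSpark h) ∧
    -- density
    (∀ g : Fin (n + 1) → EuclideanSpace ℝ (Fin n),
      IsDualFrame φ g → ∀ ε > 0,
        ∃ h : Fin (n + 1) → EuclideanSpace ℝ (Fin n),
          IsDualFrame φ h ∧ FullSpark h ∧ (∑ i, ‖g i - h i‖) < ε) := by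
  constructor
  · intro g _ hgfs
    obtain ⟨ε, hε, hop⟩ := openness_aux g hgfs
    exact ⟨ε, hε, fun h _ hsum => hop h hsum⟩
  · intro g hg ε hε
    obtain ⟨G, hG, hGfs⟩ := exists_fullSpark_dual φ hframe hfs
    exact density_aux φ g G hg hG hGfs hε
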